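/- In the setting of the primal-dual iteration with fixed stepsizes τ₀, σ₀ > 0 satisfying τ₀σ₀L² < 1 (v_{k+1} = prox_{σ₀ G}(v_k + σ₀(Xᵀy − XᵀX w'_k)), w_{k+1} = prox_{τ₀ F}(w_k + τ₀ XᵀX v_{k+1}), w'_{k+1} = 2 w_{k+1} − w_k, w'_0 = w_0), if a saddle point of φ(w, v) = ⟨Xᵀ(y − Xw), v⟩ + F(w) − G(v) exists, then there exists a saddle point (ŵ, v̂) of φ such that (w_k, v_k) → (ŵ, v̂) as k → ∞. -/

import Mathlib

open Matrix Finset Filter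

noncomputable section

/-- Euclidean inner product on ℝ^p. -/
def dotp {p : ℕ} (x y : Fin p → ℝ) : ℝ := ∑ i, x i * y i

/-- Squared Euclidean norm on ℝ^p. -/
def normSq {p : ℕ} (x : Fin p → ℝ) : ℝ := ∑ i, x i ^ 2

/-- ℓ2-operator norm of a real matrix. -/
def opNorm {m k : Type} [Fintype m] [Fintype k] (A : Matrix m k ℝ) : ℝ :=
  sSup {c | ∃ z : k → ℝ, (∑ i, z i ^ 2) ≤ 1 ∧ c = Real.sqrt (∑ i, (A.mulVec z) i ^ 2)}

/-- `G` is a norm on ℝ^p. -/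
def IsNorm {p : ℕ} (G : (Fin p → ℝ) → ℝ) : Prop :=
  (∀ x, G x = 0 ↔ x = 0) ∧ (∀ (a : ℝ) x, G (a • x) = |a| * G x) ∧
    (∀ x z, G (x + z) ≤ G x + G z)

/-- `F : ℝ^p → (−∞, +∞]` is proper, convex and lower semicontinuous. -/
def ProperConvexLsc {p : ℕ} (F : (Fin p → ℝ) → EReal) : Prop :=
  (∀ w, F w ≠ ⊥) ∧ (∃ w, F w ≠ ⊤) ∧
    (∀ (w₁ w₂ : Fin p → ℝ) (a b : ℝ), 0 ≤ a → 0 ≤ b → a + b = 1 →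
      F (a • w₁ + b • w₂) ≤ (a : EReal) * F w₁ + (b : EReal) * F w₂) ∧
    LowerSemicontinuous F

/-- The convex-concave saddle function φ(w,v) = ⟨Xᵀ(y − Xw), v⟩ + F(w) − G(v). -/
def phi {n p : ℕ} (X : Matrix (Fin n) (Fin p) ℝ) (y : Fin n → ℝ)
    (F : (Fin p → ℝ) → EReal) (G : (Fin p → ℝ) → ℝ)
    (w v : Fin p → ℝ) : EReal :=
  ((dotp (Xᵀ.mulVec (y - X.mulVec w)) v : ℝ) : EReal) + F w - ((G v : ℝ) : EReal)

/-- `(wstar, vstar)` is a saddle point of φ. -/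
def IsSaddle {n p : ℕ} (X : Matrix (Fin n) (Fin p) ℝ) (y : Fin n → ℝ)
    (F : (Fin p → ℝ) → EReal) (G : (Fin p → ℝ) → ℝ)
    (wstar vstar : Fin p → ℝ) : Prop :=
  ∀ w v, phi X y F G wstar v ≤ phi X y F G wstar vstar ∧
    phi X y F G wstar vstar ≤ phi X y F G w vstar

/-! ### Auxiliary lemmas on `dotp` and `normSq` -/

lemma normSq_nonneg' {p : ℕ} (x : Fin p → ℝ) : 0 ≤ normSq x :=
  Finset.sum_nonneg fun _ _ => sq_nonneg _

lemma normSq_eq_zero' {p : ℕ} {x : Fin p → ℝ} (h : normSq x = 0) : x = 0 := by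
  funext i
  have := (Finset.sum_eq_zero_iff_of_nonneg (fun i _ => sq_nonneg (x i))).1 h i (mem_univ i)
  simpa [pow_eq_zero_iff] using this

lemma normSq_zero' {p : ℕ} : normSq (0 : Fin p → ℝ) = 0 := by simp [normSq]

lemma normSq_smul' {p : ℕ} (c : ℝ) (x : Fin p → ℝ) : normSq (c • x) = c ^ 2 * normSq x := by
  simp only [normSq, Pi.smul_apply, smul_eq_mul, Finset.mul_sum]
  exact Finset.sum_congr rfl fun i _ => by ring

lemma normSq_sub_comm {p : ℕ} (a b : Fin p → ℝ) : normSq (a - b) = normSq (b - a) := by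
  simp only [normSq, Pi.sub_apply]
  exact Finset.sum_congr rfl fun i _ => by ring

lemma expand_smul {p : ℕ} (a d : Fin p → ℝ) (t : ℝ) :
    normSq (a + t • d) = normSq a + 2 * t * dotp a d + t ^ 2 * normSq d := by
  simp only [normSq, dotp, Pi.add_apply, Pi.smul_apply, smul_eq_mul, Finset.mul_sum,
    ← Finset.sum_add_distrib]
  exact Finset.sum_congr rfl fun i _ => by ring

lemma three_point {p : ℕ} (a b c : Fin p → ℝ) :
    dotp (b - a) (c - b) = (normSq (a - c) - normSq (a - b) - normSq (b - c)) / 2 := by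
  simp only [normSq, dotp, Pi.sub_apply, Finset.sum_div, ← Finset.sum_sub_distrib]
  exact Finset.sum_congr rfl fun i _ => by ring

lemma dotp_comm' {p : ℕ} (x z : Fin p → ℝ) : dotp x z = dotp z x := by
  simp only [dotp]; exact Finset.sum_congr rfl fun i _ => by ring

lemma dotp_sub_left' {p : ℕ} (a b c : Fin p → ℝ) : dotp (a - b) c = dotp a c - dotp b c := by
  simp only [dotp, Pi.sub_apply, ← Finset.sum_sub_distrib]
  exact Finset.sum_congr rfl fun i _ => by ring

lemma dotp_add_left' {p : ℕ} (a b c : Fin p → ℝ) : dotp (a + b) c = dotp a c + dotp b c := by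
  simp only [dotp, Pi.add_apply, ← Finset.sum_add_distrib]
  exact Finset.sum_congr rfl fun i _ => by ring

lemma dotp_smul_left' {p : ℕ} (s : ℝ) (a c : Fin p → ℝ) : dotp (s • a) c = s * dotp a c := by
  simp only [dotp, Pi.smul_apply, smul_eq_mul, Finset.mul_sum]
  exact Finset.sum_congr rfl fun i _ => by ring

lemma dotp_sub_right' {p : ℕ} (a b c : Fin p → ℝ) : dotp c (a - b) = dotp c a - dotp c b := by
  rw [dotp_comm', dotp_sub_left', dotp_comm' a c, dotp_comm' b c]

lemma dotp_zero_left' {p : ℕ} (c : Fin p → ℝ) : dotp 0 c = 0 := by simp [dotp]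

lemma dotp_neg_left' {p : ℕ} (a c : Fin p → ℝ) : dotp (-a) c = - dotp a c := by
  have := dotp_smul_left' (-1) a c
  simpa using this

lemma normSq_neg' {p : ℕ} (x : Fin p → ℝ) : normSq (-x) = normSq x := by
  simp only [normSq, Pi.neg_apply]
  exact Finset.sum_congr rfl fun i _ => by ring

lemma dotp_cs {p : ℕ} (x z : Fin p → ℝ) :
    dotp x z ≤ Real.sqrt (normSq x) * Real.sqrt (normSq z) := by
  have h : (dotp x z) ^ 2 ≤ normSq x * normSq z :=
    Finset.sum_mul_sq_le_sq_mul_sq Finset.univ x z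
  calc dotp x z ≤ |dotp x z| := le_abs_self _
    _ = Real.sqrt ((dotp x z) ^ 2) := (Real.sqrt_sq_eq_abs _).symm
    _ ≤ Real.sqrt (normSq x * normSq z) := Real.sqrt_le_sqrt h
    _ = _ := Real.sqrt_mul (normSq_nonneg' x) _

lemma dotp_cs_abs {p : ℕ} (x z : Fin p → ℝ) :
    |dotp x z| ≤ Real.sqrt (normSq x) * Real.sqrt (normSq z) := by
  rw [abs_le]
  constructor
  · have := dotp_cs (-x) z
    rw [dotp_neg_left', normSq_neg'] at this
    linarith
  · exact dotp_cs x z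

lemma dotp_eq_dotProduct {p : ℕ} (x z : Fin p → ℝ) : dotp x z = x ⬝ᵥ z := rfl

lemma dotp_adj {m p : ℕ} (M : Matrix (Fin m) (Fin p) ℝ) (u : Fin m → ℝ) (x : Fin p → ℝ) :
    dotp (Mᵀ.mulVec u) x = dotp u (M.mulVec x) := by
  rw [dotp_eq_dotProduct, dotp_eq_dotProduct, Matrix.dotProduct_mulVec,
    Matrix.mulVec_transpose]

lemma dotp_Ksym {n p : ℕ} (X : Matrix (Fin n) (Fin p) ℝ) (a c : Fin p → ℝ) :
    dotp ((Xᵀ * X).mulVec a) c = dotp a ((Xᵀ * X).mulVec c) := by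
  calc dotp ((Xᵀ * X).mulVec a) c = dotp (Xᵀ.mulVec (X.mulVec a)) c := by
        rw [← Matrix.mulVec_mulVec]
    _ = dotp (X.mulVec a) (X.mulVec c) := dotp_adj _ _ _
    _ = dotp (X.mulVec c) (X.mulVec a) := dotp_comm' _ _
    _ = dotp (Xᵀ.mulVec (X.mulVec c)) a := (dotp_adj _ _ _).symm
    _ = dotp a ((Xᵀ * X).mulVec c) := by rw [Matrix.mulVec_mulVec, dotp_comm']

/-! ### Operator norm facts -/

section opnorm
variable {n p : ℕ} (X : Matrix (Fin n) (Fin p) ℝ)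

lemma opnorm_set_bdd :
    BddAbove {c | ∃ z : (Fin n ⊕ Fin p) → ℝ, (∑ i, z i ^ 2) ≤ 1 ∧
      c = Real.sqrt (∑ i, ((Xᵀ * fromCols (1 : Matrix (Fin n) (Fin n) ℝ) (-X)).mulVec z) i ^ 2)} := by
  set A := Xᵀ * fromCols (1 : Matrix (Fin n) (Fin n) ℝ) (-X)
  refine ⟨Real.sqrt (∑ i, ∑ j, A i j ^ 2), ?_⟩
  rintro c ⟨z, hz, rfl⟩
  apply Real.sqrt_le_sqrt
  apply Finset.sum_le_sum
  intro i _
  have he : (A.mulVec z) i = ∑ j, A i j * z j := rfl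
  have h1 : (A.mulVec z) i ^ 2 ≤ (∑ j, A i j ^ 2) * (∑ j, z j ^ 2) := by
    rw [he]; exact Finset.sum_mul_sq_le_sq_mul_sq Finset.univ _ _
  have h2 : (∑ j, A i j ^ 2) * (∑ j, z j ^ 2) ≤ (∑ j, A i j ^ 2) * 1 :=
    mul_le_mul_of_nonneg_left hz (Finset.sum_nonneg fun j _ => sq_nonneg _)
  simpa using h1.trans h2

lemma opnorm_nonneg {L : ℝ}
    (hL : L = opNorm (Xᵀ * fromCols (1 : Matrix (Fin n) (Fin n) ℝ) (-X))) : 0 ≤ L := by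
  rw [hL, opNorm]
  have h0 : (0:ℝ) ∈ {c | ∃ z : (Fin n ⊕ Fin p) → ℝ, (∑ i, z i ^ 2) ≤ 1 ∧
      c = Real.sqrt (∑ i, ((Xᵀ * fromCols (1 : Matrix (Fin n) (Fin n) ℝ) (-X)).mulVec z) i ^ 2)} :=
    ⟨0, by simp, by simp [Matrix.mulVec_zero]⟩
  exact le_csSup (opnorm_set_bdd X) h0

lemma K_bound {L : ℝ}
    (hL : L = opNorm (Xᵀ * fromCols (1 : Matrix (Fin n) (Fin n) ℝ) (-X)))
    (x : Fin p → ℝ) :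
    Real.sqrt (normSq ((Xᵀ * X).mulVec x)) ≤ L * Real.sqrt (normSq x) := by
  set A := Xᵀ * fromCols (1 : Matrix (Fin n) (Fin n) ℝ) (-X) with hA
  have key : ∀ x' : Fin p → ℝ, normSq x' ≤ 1 →
      Real.sqrt (normSq ((Xᵀ * X).mulVec x')) ≤ L := by
    intro x' hx'
    have hz : A.mulVec (Sum.elim (0 : Fin n → ℝ) (-x')) = (Xᵀ * X).mulVec x' := by
      rw [hA, ← Matrix.mulVec_mulVec, Matrix.fromCols_mulVec_sumElim, ← Matrix.mulVec_mulVec]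
      simp [Matrix.neg_mulVec, Matrix.mulVec_neg]
    have hmem : Real.sqrt (normSq ((Xᵀ * X).mulVec x')) ∈ {c | ∃ z : (Fin n ⊕ Fin p) → ℝ,
        (∑ i, z i ^ 2) ≤ 1 ∧ c = Real.sqrt (∑ i, (A.mulVec z) i ^ 2)} := by
      refine ⟨Sum.elim (0 : Fin n → ℝ) (-x'), ?_, by rw [hz]; rfl⟩
      rw [Fintype.sum_sum_type]
      simpa [normSq] using hx'
    rw [hL]
    exact le_csSup (opnorm_set_bdd X) hmem
  rcases eq_or_lt_of_le (normSq_nonneg' x) with h0 | hpos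
  · have hx0 : x = 0 := normSq_eq_zero' h0.symm
    subst hx0
    simp [Matrix.mulVec_zero, normSq]
  · set s := Real.sqrt (normSq x) with hs
    have hspos : 0 < s := Real.sqrt_pos.2 hpos
    have hs2 : s ^ 2 = normSq x := Real.sq_sqrt (le_of_lt hpos)
    have h1 : normSq (s⁻¹ • x) ≤ 1 := by
      rw [normSq_smul', inv_pow, hs2, inv_mul_cancel₀ (ne_of_gt hpos)]
    have h2 := key (s⁻¹ • x) h1
    have h3 : (Xᵀ * X).mulVec (s⁻¹ • x) = s⁻¹ • ((Xᵀ * X).mulVec x) := Matrix.mulVec_smul _ _ _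
    rw [h3, normSq_smul', Real.sqrt_mul (by positivity), Real.sqrt_sq (by positivity)] at h2
    calc Real.sqrt (normSq ((Xᵀ * X).mulVec x))
        = s * (s⁻¹ * Real.sqrt (normSq ((Xᵀ * X).mulVec x))) := by field_simp
      _ ≤ s * L := mul_le_mul_of_nonneg_left h2 (le_of_lt hspos)
      _ = L * s := mul_comm _ _

end opnorm

/-! ### Limit of small-step perturbations -/

lemma nonneg_of_forall_pos {A B : ℝ} (h : ∀ t : ℝ, 0 < t → t ≤ 1 → 0 ≤ A + t * B) : 0 ≤ A := by
  have ht : Filter.Tendsto (fun m : ℕ => A + (1 / (m + 1)) * B) Filter.atTop (nhds A) := by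
    have h0 : Filter.Tendsto (fun m : ℕ => (1:ℝ) / (m + 1)) Filter.atTop (nhds 0) :=
      tendsto_one_div_add_atTop_nhds_zero_nat
    simpa using tendsto_const_nhds.add (h0.mul_const B)
  refine ge_of_tendsto ht (Filter.Eventually.of_forall fun m => ?_)
  refine h _ (by positivity) ?_
  rw [div_le_one (by positivity)]
  have : (0:ℝ) ≤ m := Nat.cast_nonneg m
  linarith

lemma comb_eq {p : ℕ} (x u : Fin p → ℝ) (t : ℝ) :
    x + t • (u - x) = (1 - t) • x + t • u := by
  funext i; simp [Pi.smul_apply]; ring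

lemma G_convex_comb {p : ℕ} {G : (Fin p → ℝ) → ℝ} (hG : IsNorm G) (x u : Fin p → ℝ)
    {t : ℝ} (ht0 : 0 ≤ t) (ht1 : t ≤ 1) :
    G (x + t • (u - x)) ≤ (1 - t) * G x + t * G u := by
  rw [comb_eq]
  calc G ((1 - t) • x + t • u) ≤ G ((1 - t) • x) + G (t • u) := hG.2.2 _ _
    _ = |1 - t| * G x + |t| * G u := by rw [hG.2.1, hG.2.1]
    _ = (1 - t) * G x + t * G u := by rw [abs_of_nonneg (by linarith), abs_of_nonneg ht0]

/-- Variational inequality for the G-prox step. -/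
lemma prox_vi_G {p : ℕ} {G : (Fin p → ℝ) → ℝ} (hG : IsNorm G) {σ : ℝ} (hσ : 0 < σ)
    {x z : Fin p → ℝ}
    (h : ∀ u, normSq (x - z) / 2 + σ * G x ≤ normSq (u - z) / 2 + σ * G u)
    (u : Fin p → ℝ) :
    0 ≤ dotp (x - z) (u - x) + σ * (G u - G x) := by
  apply nonneg_of_forall_pos (B := normSq (u - x) / 2)
  intro t ht0 ht1
  have h1 := h (x + t • (u - x))
  have h2 : normSq (x + t • (u - x) - z) = normSq (x - z) + 2 * t * dotp (x - z) (u - x)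
      + t ^ 2 * normSq (u - x) := by
    have e : x + t • (u - x) - z = (x - z) + t • (u - x) := by abel
    rw [e, expand_smul]
  have h3 := G_convex_comb hG x u (le_of_lt ht0) ht1
  have h4 : σ * G (x + t • (u - x)) ≤ σ * ((1 - t) * G x + t * G u) :=
    mul_le_mul_of_nonneg_left h3 (le_of_lt hσ)
  have key : 0 ≤ t * (dotp (x - z) (u - x) + σ * (G u - G x) + t * (normSq (u - x) / 2)) := by
    nlinarith [h1, h2, h4]
  nlinarith [key, ht0]

/-- Variational inequality for the F-prox step (real form). -/
lemma prox_vi_F {p : ℕ} {F : (Fin p → ℝ) → EReal}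
    (hFbot : ∀ w, F w ≠ ⊥)
    (hFcvx : ∀ (w₁ w₂ : Fin p → ℝ) (a b : ℝ), 0 ≤ a → 0 ≤ b → a + b = 1 →
      F (a • w₁ + b • w₂) ≤ (a : EReal) * F w₁ + (b : EReal) * F w₂)
    {τ : ℝ} (hτ : 0 < τ) {x z u : Fin p → ℝ} {fx fu : ℝ}
    (hfx : F x = (fx : EReal)) (hfu : F u = (fu : EReal))
    (h : ∀ u' : Fin p → ℝ, ∀ cu' : ℝ, F u' = (cu' : EReal) →
      normSq (x - z) / 2 + τ * fx ≤ normSq (u' - z) / 2 + τ * cu') :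
    0 ≤ dotp (x - z) (u - x) + τ * (fu - fx) := by
  apply nonneg_of_forall_pos (B := normSq (u - x) / 2)
  intro t ht0 ht1
  have hcomb := hFcvx x u (1 - t) t (by linarith) (le_of_lt ht0) (by ring)
  rw [hfx, hfu, ← EReal.coe_mul, ← EReal.coe_mul, ← EReal.coe_add] at hcomb
  rw [← comb_eq] at hcomb
  have hnetop : F (x + t • (u - x)) ≠ ⊤ :=
    ne_top_of_le_ne_top (EReal.coe_ne_top _) hcomb
  have hFg : F (x + t • (u - x)) = (((F (x + t • (u - x))).toReal : ℝ) : EReal) :=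
    (EReal.coe_toReal hnetop (hFbot _)).symm
  set g : ℝ := (F (x + t • (u - x))).toReal with hgdef
  have hgle : g ≤ (1 - t) * fx + t * fu := by
    rw [hFg] at hcomb; exact EReal.coe_le_coe_iff.1 hcomb
  have h1 := h _ g hFg
  have h2 : normSq (x + t • (u - x) - z) = normSq (x - z) + 2 * t * dotp (x - z) (u - x)
      + t ^ 2 * normSq (u - x) := by
    have e : x + t • (u - x) - z = (x - z) + t • (u - x) := by abel
    rw [e, expand_smul]
  have key : 0 ≤ t * (dotp (x - z) (u - x) + τ * (fu - fx) + t * (normSq (u - x) / 2)) := by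
    nlinarith [h1, h2, hgle, hτ]
  nlinarith [key, ht0]

/-! ### Convergence bridges -/

lemma tendsto_of_normSq {p : ℕ} {x : ℕ → Fin p → ℝ} {a : Fin p → ℝ}
    (h : Tendsto (fun k => normSq (x k - a)) atTop (nhds 0)) :
    Tendsto x atTop (nhds a) := by
  rw [tendsto_pi_nhds]
  intro i
  rw [tendsto_iff_dist_tendsto_zero]
  have h1 : ∀ k, dist (x k i) (a i) = Real.sqrt ((x k i - a i) ^ 2) := by
    intro k; rw [Real.dist_eq, Real.sqrt_sq_eq_abs]
  have h2 : ∀ k, Real.sqrt ((x k i - a i) ^ 2) ≤ Real.sqrt (normSq (x k - a)) := fun k =>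
    Real.sqrt_le_sqrt
      (Finset.single_le_sum (f := fun j => (x k j - a j) ^ 2) (fun j _ => sq_nonneg _)
        (mem_univ i))
  have h3 : Tendsto (fun k => Real.sqrt (normSq (x k - a))) atTop (nhds 0) := by
    have := (Real.continuous_sqrt.tendsto 0).comp h
    simpa [Function.comp_def] using this
  exact squeeze_zero (fun k => dist_nonneg) (fun k => by rw [h1]; exact h2 k) h3

lemma normSq_tendsto {p : ℕ} {x : ℕ → Fin p → ℝ} {a : Fin p → ℝ}
    (h : Tendsto x atTop (nhds a)) :
    Tendsto (fun k => normSq (x k - a)) atTop (nhds 0) := by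
  rw [tendsto_pi_nhds] at h
  have hc : ∀ i : Fin p, Tendsto (fun k => (x k i - a i) ^ 2) atTop (nhds 0) := by
    intro i
    have h1 : Tendsto (fun k => x k i - a i) atTop (nhds (a i - a i)) :=
      (h i).sub tendsto_const_nhds
    rw [sub_self] at h1
    simpa [sq] using h1.mul h1
  have := tendsto_finset_sum (univ : Finset (Fin p)) (fun i _ => hc i)
  simpa [normSq, Pi.sub_apply] using this

lemma dotp_tendsto {p : ℕ} {x z : ℕ → Fin p → ℝ} {a b : Fin p → ℝ}
    (hx : Tendsto x atTop (nhds a)) (hz : Tendsto z atTop (nhds b)) :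
    Tendsto (fun k => dotp (x k) (z k)) atTop (nhds (dotp a b)) := by
  rw [tendsto_pi_nhds] at hx hz
  have := tendsto_finset_sum (univ : Finset (Fin p)) (fun i _ => (hx i).mul (hz i))
  simpa [dotp] using this

lemma mulVec_tendsto {m p : ℕ} (M : Matrix (Fin m) (Fin p) ℝ) {x : ℕ → Fin p → ℝ}
    {a : Fin p → ℝ} (hx : Tendsto x atTop (nhds a)) :
    Tendsto (fun k => M.mulVec (x k)) atTop (nhds (M.mulVec a)) := by
  rw [tendsto_pi_nhds] at hx ⊢
  intro i
  have := tendsto_finset_sum (univ : Finset (Fin p)) (fun j _ => (hx j).const_mul (M i j))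
  simpa [Matrix.mulVec, dotProduct] using this

/-! ### Norm `G` facts -/

lemma G_zero {p : ℕ} {G : (Fin p → ℝ) → ℝ} (hG : IsNorm G) : G 0 = 0 := (hG.1 0).2 rfl

lemma G_abs_sub {p : ℕ} {G : (Fin p → ℝ) → ℝ} (hG : IsNorm G) (a b : Fin p → ℝ) :
    |G a - G b| ≤ G (a - b) := by
  have hneg : ∀ x : Fin p → ℝ, G (-x) = G x := by
    intro x
    have := hG.2.1 (-1) x
    simpa using this
  rw [abs_sub_le_iff]
  constructor
  · have h1 : G a ≤ G b + G (a - b) := by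
      have := hG.2.2 b (a - b); simpa using this
    linarith
  · have h1 : G b ≤ G a + G (b - a) := by
      have := hG.2.2 a (b - a); simpa using this
    have h2 : G (b - a) = G (a - b) := by rw [← hneg (a - b)]; congr 1; abel
    linarith

lemma G_sum_le {p : ℕ} {G : (Fin p → ℝ) → ℝ} (hG : IsNorm G) (s : Finset (Fin p))
    (f : Fin p → Fin p → ℝ) : G (∑ i ∈ s, f i) ≤ ∑ i ∈ s, G (f i) := by
  induction s using Finset.cons_induction with
  | empty => simp [G_zero hG]
  | cons i s hi ih =>
    rw [Finset.sum_cons, Finset.sum_cons]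
    exact le_trans (hG.2.2 _ _) (by linarith)

lemma G_le_sum_coords {p : ℕ} {G : (Fin p → ℝ) → ℝ} (hG : IsNorm G) (d : Fin p → ℝ) :
    G d ≤ ∑ i, |d i| * G (fun j => if j = i then 1 else 0) := by
  have hd : d = ∑ i, d i • (fun j => if j = i then 1 else 0 : Fin p → ℝ) := by
    funext j
    rw [Finset.sum_apply]
    simp [Pi.smul_apply]
  calc G d = G (∑ i, d i • (fun j => if j = i then 1 else 0 : Fin p → ℝ)) := by rw [← hd]
    _ ≤ ∑ i, G (d i • (fun j => if j = i then 1 else 0 : Fin p → ℝ)) := G_sum_le hG _ _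
    _ = ∑ i, |d i| * G (fun j => if j = i then 1 else 0) := by
        exact Finset.sum_congr rfl fun i _ => hG.2.1 _ _

lemma G_tendsto {p : ℕ} {G : (Fin p → ℝ) → ℝ} (hG : IsNorm G) {x : ℕ → Fin p → ℝ}
    {a : Fin p → ℝ} (hx : Tendsto x atTop (nhds a)) :
    Tendsto (fun k => G (x k)) atTop (nhds (G a)) := by
  rw [tendsto_iff_dist_tendsto_zero]
  have hx' := tendsto_pi_nhds.1 hx
  have hbound : ∀ k, dist (G (x k)) (G a) ≤
      ∑ i, |x k i - a i| * G (fun j => if j = i then 1 else 0) := by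
    intro k
    rw [Real.dist_eq]
    refine le_trans (G_abs_sub hG _ _) (le_trans (G_le_sum_coords hG _) (le_of_eq ?_))
    exact Finset.sum_congr rfl fun i _ => rfl
  have hlim : Tendsto (fun k => ∑ i, |x k i - a i| * G (fun j => if j = i then 1 else 0))
      atTop (nhds 0) := by
    have hterm : ∀ i : Fin p,
        Tendsto (fun k => |x k i - a i| * G (fun j => if j = i then 1 else 0))
          atTop (nhds 0) := by
      intro i
      have h1 : Tendsto (fun k => x k i - a i) atTop (nhds (a i - a i)) :=
        (hx' i).sub tendsto_const_nhds
      rw [sub_self] at h1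
      have h2 : Tendsto (fun k => |x k i - a i|) atTop (nhds 0) := by
        simpa using h1.abs
      simpa using h2.mul_const _
    have := tendsto_finset_sum (univ : Finset (Fin p)) (fun i _ => hterm i)
    simpa using this
  exact squeeze_zero (fun k => dist_nonneg) hbound hlim

/-! ### Misc real lemmas -/

lemma amgm_weighted {τ σ A B L : ℝ} (hτ : 0 < τ) (hσ : 0 < σ) (hL : 0 ≤ L) :
    2 * τ * σ * (L * A * B) ≤ L * Real.sqrt (τ * σ) * (σ * A ^ 2 + τ * B ^ 2) := by
  set s := Real.sqrt (τ * σ) with hs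
  have hs2 : s ^ 2 = τ * σ := Real.sq_sqrt (by positivity)
  have hspos : 0 < s := Real.sqrt_pos.2 (by positivity)
  have h1 : 0 ≤ σ * A ^ 2 - 2 * s * A * B + τ * B ^ 2 := by
    nlinarith [sq_nonneg (σ * A - s * B), hs2, hσ]
  have h2 : 0 ≤ 2 * s * (σ * A ^ 2 - 2 * s * A * B + τ * B ^ 2) := by positivity
  have h3 : s ^ 2 * (A * B) = τ * σ * (A * B) := by rw [hs2]
  nlinarith [mul_le_mul_of_nonneg_left
    (show 2 * τ * σ * (A * B) ≤ s * (σ * A ^ 2 + τ * B ^ 2) by nlinarith [h2, h3]) hL]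

lemma antitone_tendsto_zero (T : ℕ → ℝ) (hmono : ∀ k, T (k + 1) ≤ T k) (hnn : ∀ k, 0 ≤ T k)
    (φ : ℕ → ℕ) (hφ : StrictMono φ) (hsub : Tendsto (T ∘ φ) atTop (nhds 0)) :
    Tendsto T atTop (nhds 0) := by
  have hanti : Antitone T := antitone_nat_of_succ_le hmono
  have hbdd : BddBelow (Set.range T) := ⟨0, by rintro _ ⟨k, rfl⟩; exact hnn k⟩
  have hconv := tendsto_atTop_ciInf hanti hbdd
  have hsub2 : Tendsto (T ∘ φ) atTop (nhds (⨅ k, T k)) := hconv.comp hφ.tendsto_atTop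
  have := tendsto_nhds_unique hsub hsub2
  rwa [← this] at hconv

lemma coord_le_sqrt_normSq {p : ℕ} (x : Fin p → ℝ) (i : Fin p) :
    |x i| ≤ Real.sqrt (normSq x) := by
  rw [← Real.sqrt_sq_eq_abs]
  exact Real.sqrt_le_sqrt
    (Finset.single_le_sum (f := fun j => x j ^ 2) (fun j _ => sq_nonneg _) (mem_univ i))
set_option maxHeartbeats 1000000 in
/-- pointwise convergence of the primal-dual iterates to a saddle point. -/
theorem pdsp_pointwise_convergence {n p : ℕ} (X : Matrix (Fin n) (Fin p) ℝ) (y : Fin n → ℝ)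
    (F : (Fin p → ℝ) → EReal) (G : (Fin p → ℝ) → ℝ)
    (hF : ProperConvexLsc F) (hG : IsNorm G)
    (L : ℝ) (hL : L = opNorm (Xᵀ * fromCols (1 : Matrix (Fin n) (Fin n) ℝ) (-X)))
    (τ σ : ℝ) (hτ : 0 < τ) (hσ : 0 < σ) (hstep : τ * σ * L ^ 2 < 1)
    (w v w' : ℕ → Fin p → ℝ)
    (hw'0 : w' 0 = w 0)
    -- v_{k+1} = prox_{σ G}(v_k + σ(Xᵀy − XᵀX w'_k))
    (hv : ∀ k, ∀ u : Fin p → ℝ,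
      normSq (v (k+1) - (v k + σ • (Xᵀ.mulVec y - (Xᵀ * X).mulVec (w' k)))) / 2
          + σ * G (v (k+1))
        ≤ normSq (u - (v k + σ • (Xᵀ.mulVec y - (Xᵀ * X).mulVec (w' k)))) / 2
          + σ * G u)
    -- w_{k+1} = prox_{τ F}(w_k + τ XᵀX v_{k+1})
    (hw : ∀ k, ∀ u : Fin p → ℝ,
      ((normSq (w (k+1) - (w k + τ • (Xᵀ * X).mulVec (v (k+1)))) / 2 : ℝ) : EReal)
          + (τ : EReal) * F (w (k+1))
        ≤ ((normSq (u - (w k + τ • (Xᵀ * X).mulVec (v (k+1)))) / 2 : ℝ) : EReal)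
          + (τ : EReal) * F u)
    -- extrapolation step
    (hw' : ∀ k, w' (k+1) = (2 : ℝ) • w (k+1) - w k)
    -- a saddle point exists
    (hexists : ∃ wstar vstar : Fin p → ℝ, IsSaddle X y F G wstar vstar) :
    ∃ wh vh : Fin p → ℝ, IsSaddle X y F G wh vh ∧
      Filter.Tendsto w Filter.atTop (nhds wh) ∧
      Filter.Tendsto v Filter.atTop (nhds vh) := by
  obtain ⟨hFbot, ⟨u₀, hu₀⟩, hFcvx, hFlsc⟩ := hF
  set K := Xᵀ * X with hK
  set b := Xᵀ.mulVec y with hb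
  have hL0 : 0 ≤ L := opnorm_nonneg X hL
  set ρ := L * Real.sqrt (τ * σ) with hρ
  have hρ0 : 0 ≤ ρ := mul_nonneg hL0 (Real.sqrt_nonneg _)
  have hρ1 : ρ < 1 := by
    have hsq : ρ ^ 2 = τ * σ * L ^ 2 := by
      rw [hρ, mul_pow, Real.sq_sqrt (by positivity)]
      ring
    nlinarith [hρ0, hsq, hstep]
  have h1ρ : 0 < 1 - ρ := by linarith
  have hKsym : ∀ a c : Fin p → ℝ, dotp (K.mulVec a) c = dotp (K.mulVec c) a := by
    intro a c
    rw [hK, dotp_Ksym, dotp_comm']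
  have crossK : ∀ a c : Fin p → ℝ,
      2 * τ * σ * |dotp (K.mulVec a) c| ≤ ρ * (σ * normSq a + τ * normSq c) := by
    intro a c
    have h1 : |dotp (K.mulVec a) c| ≤ L * Real.sqrt (normSq a) * Real.sqrt (normSq c) := by
      refine le_trans (dotp_cs_abs _ _) ?_
      exact mul_le_mul_of_nonneg_right (by rw [hK]; exact K_bound X hL a) (Real.sqrt_nonneg _)
    have h2 := amgm_weighted (τ := τ) (σ := σ) (A := Real.sqrt (normSq a))
      (B := Real.sqrt (normSq c)) (L := L) hτ hσ hL0
    rw [Real.sq_sqrt (normSq_nonneg' a), Real.sq_sqrt (normSq_nonneg' c)] at h2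
    calc 2 * τ * σ * |dotp (K.mulVec a) c|
        ≤ 2 * τ * σ * (L * Real.sqrt (normSq a) * Real.sqrt (normSq c)) :=
          mul_le_mul_of_nonneg_left h1 (by positivity)
      _ ≤ L * Real.sqrt (τ * σ) * (σ * normSq a + τ * normSq c) := h2
      _ = ρ * (σ * normSq a + τ * normSq c) := by rw [hρ]
  -- real values of F along the iterates
  have hu₀c : F u₀ = (((F u₀).toReal : ℝ) : EReal) := (EReal.coe_toReal hu₀ (hFbot u₀)).symm
  set c₀ : ℝ := (F u₀).toReal with hc₀
  have hfne : ∀ k, F (w (k+1)) ≠ ⊤ := by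
    intro k htop
    have h := hw k u₀
    rw [htop, hu₀c, EReal.coe_mul_top_of_pos hτ,
      EReal.add_top_of_ne_bot (EReal.coe_ne_bot _), ← EReal.coe_mul, ← EReal.coe_add] at h
    exact EReal.coe_ne_top _ (top_le_iff.1 h)
  set f : ℕ → ℝ := fun k => (F (w (k+1))).toReal with hfdef
  have hfco : ∀ k, F (w (k+1)) = ((f k : ℝ) : EReal) := fun k =>
    (EReal.coe_toReal (hfne k) (hFbot _)).symm
  have hwR : ∀ k (u' : Fin p → ℝ) (cu : ℝ), F u' = (cu : EReal) →
      normSq (w (k+1) - (w k + τ • K.mulVec (v (k+1)))) / 2 + τ * f k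
        ≤ normSq (u' - (w k + τ • K.mulVec (v (k+1)))) / 2 + τ * cu := by
    intro k u' cu hcu
    have h := hw k u'
    rw [hfco k, hcu, ← EReal.coe_mul, ← EReal.coe_mul, ← EReal.coe_add, ← EReal.coe_add] at h
    exact EReal.coe_le_coe_iff.1 h
  -- phi bridges
  have philem : ∀ (ww vv : Fin p → ℝ) (c : ℝ), F ww = (c : EReal) →
      phi X y F G ww vv = ((dotp (b - K.mulVec ww) vv + c - G vv : ℝ) : EReal) := by
    intro ww vv c hc
    have harg : Xᵀ.mulVec (y - X.mulVec ww) = b - K.mulVec ww := by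
      rw [Matrix.mulVec_sub, Matrix.mulVec_mulVec, ← hb, ← hK]
    rw [phi, hc, harg, ← EReal.coe_add, ← EReal.coe_sub]
  have phitop : ∀ ww vv : Fin p → ℝ, F ww = ⊤ → phi X y F G ww vv = ⊤ := by
    intro ww vv h
    rw [phi, h, EReal.add_top_of_ne_bot (EReal.coe_ne_bot _), EReal.top_sub_coe]
  have saddle_real : ∀ ws vs : Fin p → ℝ, IsSaddle X y F G ws vs →
      ∃ fs : ℝ, F ws = (fs : EReal) ∧
        (∀ vv, dotp (b - K.mulVec ws) vv - G vv ≤ dotp (b - K.mulVec ws) vs - G vs) ∧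
        (∀ ww (cw : ℝ), F ww = (cw : EReal) →
          dotp (b - K.mulVec ws) vs + fs ≤ dotp (b - K.mulVec ww) vs + cw) := by
    intro ws vs hsad
    have hwsne : F ws ≠ ⊤ := by
      intro h
      have h2 := (hsad u₀ vs).2
      rw [phitop ws vs h, philem u₀ vs c₀ hu₀c] at h2
      exact EReal.coe_ne_top _ (top_le_iff.1 h2)
    have hfs : F ws = (((F ws).toReal : ℝ) : EReal) := (EReal.coe_toReal hwsne (hFbot _)).symm
    refine ⟨(F ws).toReal, hfs, ?_, ?_⟩
    · intro vv
      have h1 := (hsad ws vv).1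
      rw [philem ws vv _ hfs, philem ws vs _ hfs] at h1
      have := EReal.coe_le_coe_iff.1 h1
      linarith
    · intro ww cw hcw
      have h1 := (hsad ww vs).2
      rw [philem ws vs _ hfs, philem ww vs cw hcw] at h1
      have := EReal.coe_le_coe_iff.1 h1
      linarith
  have saddle_of_real : ∀ (ws vs : Fin p → ℝ) (fs : ℝ), F ws = (fs : EReal) →
      (∀ vv, dotp (b - K.mulVec ws) vv - G vv ≤ dotp (b - K.mulVec ws) vs - G vs) →
      (∀ ww (cw : ℝ), F ww = (cw : EReal) →
        dotp (b - K.mulVec ws) vs + fs ≤ dotp (b - K.mulVec ww) vs + cw) →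
      IsSaddle X y F G ws vs := by
    intro ws vs fs hfs h1 h2 ww vv
    constructor
    · rw [philem ws vv fs hfs, philem ws vs fs hfs]
      refine EReal.coe_le_coe_iff.2 ?_
      have := h1 vv
      linarith
    · by_cases hww : F ww = ⊤
      · rw [phitop ww vs hww]
        exact le_top
      · have hcw : F ww = (((F ww).toReal : ℝ) : EReal) := (EReal.coe_toReal hww (hFbot _)).symm
        rw [philem ws vs fs hfs, philem ww vs _ hcw]
        refine EReal.coe_le_coe_iff.2 ?_
        have := h2 ww _ hcw
        linarith
  -- variational inequalities
  have hVIv : ∀ k (u : Fin p → ℝ),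
      0 ≤ dotp (v (k+1) - (v k + σ • (b - K.mulVec (w' k)))) (u - v (k+1))
        + σ * (G u - G (v (k+1))) := fun k => prox_vi_G hG hσ (hv k)
  have hVIw : ∀ k (u : Fin p → ℝ) (cu : ℝ), F u = (cu : EReal) →
      0 ≤ dotp (w (k+1) - (w k + τ • K.mulVec (v (k+1)))) (u - w (k+1))
        + τ * (cu - f k) := fun k u cu hcu => prox_vi_F hFbot hFcvx hτ (hfco k) hcu (hwR k)
  have hw'e : ∀ k, w' (k+1) - w (k+1) = w (k+1) - w k := by
    intro k
    rw [hw' k]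
    funext i
    simp [Pi.smul_apply]
    ring
  -- the key one-step estimate, for an arbitrary saddle point
  have key : ∀ (ws vs : Fin p → ℝ) (fs : ℝ), F ws = (fs : EReal) →
      (∀ vv, dotp (b - K.mulVec ws) vv - G vv ≤ dotp (b - K.mulVec ws) vs - G vs) →
      (∀ ww (cw : ℝ), F ww = (cw : EReal) →
        dotp (b - K.mulVec ws) vs + fs ≤ dotp (b - K.mulVec ww) vs + cw) →
      ∀ k,
        (σ * normSq (w (k+1) - ws) + τ * normSq (v (k+1) - vs)
          + 2 * τ * σ * dotp (K.mulVec (w' (k+1) - w (k+1))) (vs - v (k+1))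
          + ρ * (σ * normSq (w' (k+1) - w (k+1))))
        + (1 - ρ) * (σ * normSq (w (k+1) - w k) + τ * normSq (v (k+1) - v k))
        ≤ σ * normSq (w k - ws) + τ * normSq (v k - vs)
          + 2 * τ * σ * dotp (K.mulVec (w' k - w k)) (vs - v k)
          + ρ * (σ * normSq (w' k - w k)) := by
    intro ws vs fs hfs hs1 hs2 k
    rw [hw'e k]
    -- dual variational inequality
    have hdual := hVIv k vs
    rw [show v (k+1) - (v k + σ • (b - K.mulVec (w' k)))
        = (v (k+1) - v k) - σ • (b - K.mulVec (w' k)) from by abel,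
      dotp_sub_left', dotp_smul_left', three_point (v k) (v (k+1)) vs] at hdual
    have hdual2 : 0 ≤ 2 * τ * ((normSq (v k - vs) - normSq (v k - v (k+1))
        - normSq (v (k+1) - vs)) / 2
        - σ * dotp (b - K.mulVec (w' k)) (vs - v (k+1)) + σ * (G vs - G (v (k+1)))) :=
      mul_nonneg (by positivity) hdual
    -- primal variational inequality
    have hprim := hVIw k ws fs hfs
    rw [show w (k+1) - (w k + τ • K.mulVec (v (k+1)))
        = (w (k+1) - w k) - τ • K.mulVec (v (k+1)) from by abel,
      dotp_sub_left', dotp_smul_left', three_point (w k) (w (k+1)) ws] at hprim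
    have hprim2 : 0 ≤ 2 * σ * ((normSq (w k - ws) - normSq (w k - w (k+1))
        - normSq (w (k+1) - ws)) / 2
        - τ * dotp (K.mulVec (v (k+1))) (ws - w (k+1)) + τ * (fs - f k)) :=
      mul_nonneg (by positivity) hprim
    -- saddle-point gap is nonnegative
    have hP : 0 ≤ (dotp (b - K.mulVec (w (k+1))) vs + f k - G vs)
        - (dotp (b - K.mulVec ws) (v (k+1)) + fs - G (v (k+1))) := by
      have ha := hs1 (v (k+1))
      have hb2 := hs2 (w (k+1)) (f k) (hfco k)
      linarith
    have hP2 : 0 ≤ 2 * τ * σ * ((dotp (b - K.mulVec (w (k+1))) vs + f k - G vs)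
        - (dotp (b - K.mulVec ws) (v (k+1)) + fs - G (v (k+1)))) :=
      mul_nonneg (by positivity) hP
    -- bilinear identity
    have hId : dotp (b - K.mulVec (w' k)) (vs - v (k+1))
        + dotp (K.mulVec (v (k+1))) (ws - w (k+1))
        = dotp (K.mulVec (w (k+1) - w' k)) (vs - v (k+1))
          + dotp (b - K.mulVec (w (k+1))) vs - dotp (b - K.mulVec ws) (v (k+1)) := by
      simp only [Matrix.mulVec_sub, dotp_sub_left', dotp_sub_right']
      rw [hKsym (v (k+1)) ws, hKsym (v (k+1)) (w (k+1))]
      ring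
    -- splitting of the extrapolation cross term
    have hsplit : dotp (K.mulVec (w (k+1) - w' k)) (vs - v (k+1))
        = dotp (K.mulVec (w (k+1) - w k)) (vs - v (k+1))
          - dotp (K.mulVec (w' k - w k)) (vs - v k)
          - dotp (K.mulVec (w' k - w k)) (v k - v (k+1)) := by
      simp only [Matrix.mulVec_sub, dotp_sub_left', dotp_sub_right']
      ring
    -- bound the residual cross term
    have hcb := crossK (w' k - w k) (v k - v (k+1))
    have hcb2 : 2 * τ * σ * dotp (K.mulVec (w' k - w k)) (v k - v (k+1))
        ≤ ρ * (σ * normSq (w' k - w k) + τ * normSq (v k - v (k+1))) := by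
      have h1 : dotp (K.mulVec (w' k - w k)) (v k - v (k+1))
          ≤ |dotp (K.mulVec (w' k - w k)) (v k - v (k+1))| := le_abs_self _
      nlinarith [mul_le_mul_of_nonneg_left h1 (show (0:ℝ) ≤ 2 * τ * σ by positivity), hcb]
    -- match normSq orientations with the goal
    rw [normSq_sub_comm (v k) (v (k+1))] at hdual2 hcb2
    rw [normSq_sub_comm (w k) (w (k+1))] at hprim2
    -- scaled identities
    have hId2 := congrArg (fun r : ℝ => 2 * τ * σ * r) hId
    have hsplit2 := congrArg (fun r : ℝ => 2 * τ * σ * r) hsplit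
    linarith [hdual2, hprim2, hP2, hId2, hsplit2, hcb2]
  -- generic lower bound for the Lyapunov functional
  have Tlb : ∀ (ws vs : Fin p → ℝ) (k : ℕ),
      (1 - ρ) * (σ * normSq (w k - ws) + τ * normSq (v k - vs))
      ≤ σ * normSq (w k - ws) + τ * normSq (v k - vs)
        + 2 * τ * σ * dotp (K.mulVec (w' k - w k)) (vs - v k)
        + ρ * (σ * normSq (w' k - w k)) := by
    intro ws vs k
    have habs := crossK (w' k - w k) (vs - v k)
    have hd : -(2 * τ * σ * dotp (K.mulVec (w' k - w k)) (vs - v k))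
        ≤ 2 * τ * σ * |dotp (K.mulVec (w' k - w k)) (vs - v k)| := by
      have h1 : -(dotp (K.mulVec (w' k - w k)) (vs - v k))
          ≤ |dotp (K.mulVec (w' k - w k)) (vs - v k)| := neg_le_abs _
      nlinarith [mul_le_mul_of_nonneg_left h1 (show (0:ℝ) ≤ 2 * τ * σ by positivity)]
    rw [normSq_sub_comm vs (v k)] at habs
    have hn1 : 0 ≤ ρ * (σ * normSq (w k - ws)) :=
      mul_nonneg hρ0 (mul_nonneg hσ.le (normSq_nonneg' _))
    linarith [habs, hd, hn1]
  -- Phase 1 : use the given saddle point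
  obtain ⟨ws, vs, hsad⟩ := hexists
  obtain ⟨fs, hfs, hs1, hs2⟩ := saddle_real ws vs hsad
  have key1 := key ws vs fs hfs hs1 hs2
  set T : ℕ → ℝ := fun k => σ * normSq (w k - ws) + τ * normSq (v k - vs)
    + 2 * τ * σ * dotp (K.mulVec (w' k - w k)) (vs - v k)
    + ρ * (σ * normSq (w' k - w k)) with hT
  set AA : ℕ → ℝ := fun k => σ * normSq (w (k+1) - w k) with hAA
  set BB : ℕ → ℝ := fun k => τ * normSq (v (k+1) - v k) with hBB
  have hkeyT : ∀ k, T (k+1) + (1 - ρ) * (AA k + BB k) ≤ T k := fun k => key1 k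
  have hABnn : ∀ k, 0 ≤ AA k + BB k := fun k => add_nonneg
    (mul_nonneg hσ.le (normSq_nonneg' _)) (mul_nonneg hτ.le (normSq_nonneg' _))
  have hTlb1 : ∀ k, (1 - ρ) * (σ * normSq (w k - ws) + τ * normSq (v k - vs)) ≤ T k :=
    fun k => Tlb ws vs k
  have hTnn : ∀ k, 0 ≤ T k := by
    intro k
    refine le_trans ?_ (hTlb1 k)
    exact mul_nonneg h1ρ.le (add_nonneg (mul_nonneg hσ.le (normSq_nonneg' _))
      (mul_nonneg hτ.le (normSq_nonneg' _)))
  have hTmono : ∀ k, T (k+1) ≤ T k := by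
    intro k
    have h1 := hkeyT k
    have h2 : 0 ≤ (1 - ρ) * (AA k + BB k) := mul_nonneg h1ρ.le (hABnn k)
    linarith
  have hTle : ∀ k, T k ≤ T 0 := fun k => (antitone_nat_of_succ_le hTmono) (Nat.zero_le k)
  -- the residuals tend to zero
  have hAB0 : Filter.Tendsto (fun k => AA k + BB k) Filter.atTop (nhds 0) := by
    have hsum : ∀ m, ∑ k ∈ Finset.range m, (1 - ρ) * (AA k + BB k) ≤ T 0 - T m := by
      intro m
      induction m with
      | zero => simp
      | succ m ih =>
        rw [Finset.sum_range_succ]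
        have := hkeyT m
        linarith
    have hsum2 : ∀ m, ∑ k ∈ Finset.range m, (1 - ρ) * (AA k + BB k) ≤ T 0 := by
      intro m
      have := hTnn m
      linarith [hsum m]
    have hsummable : Summable (fun k => (1 - ρ) * (AA k + BB k)) :=
      summable_of_sum_range_le (fun k => mul_nonneg h1ρ.le (hABnn k)) hsum2
    have h0 := hsummable.tendsto_atTop_zero
    have := h0.const_mul ((1 - ρ)⁻¹)
    simp only [mul_zero] at this
    have heq : ∀ k, (1 - ρ)⁻¹ * ((1 - ρ) * (AA k + BB k)) = AA k + BB k := fun k =>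
      inv_mul_cancel_left₀ (ne_of_gt h1ρ) _
    simpa [heq] using this
  have hAA0 : Filter.Tendsto AA Filter.atTop (nhds 0) :=
    squeeze_zero (fun k => mul_nonneg hσ.le (normSq_nonneg' _))
      (fun k => by have := mul_nonneg hτ.le (normSq_nonneg' (v (k+1) - v k)); simp only [hAA, hBB]; linarith)
      hAB0
  have hBB0 : Filter.Tendsto BB Filter.atTop (nhds 0) :=
    squeeze_zero (fun k => mul_nonneg hτ.le (normSq_nonneg' _))
      (fun k => by have := mul_nonneg hσ.le (normSq_nonneg' (w (k+1) - w k)); simp only [hAA, hBB]; linarith)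
      hAB0
  have hdw : Filter.Tendsto (fun k => w (k+1) - w k) Filter.atTop (nhds 0) := by
    apply tendsto_of_normSq
    have h1 : Filter.Tendsto (fun k => normSq (w (k+1) - w k)) Filter.atTop (nhds 0) := by
      have := hAA0.const_mul (σ⁻¹)
      simp only [mul_zero] at this
      have heq : ∀ k, σ⁻¹ * AA k = normSq (w (k+1) - w k) := fun k =>
        inv_mul_cancel_left₀ (ne_of_gt hσ) _
      simpa [heq] using this
    simpa [sub_zero] using h1
  have hdv : Filter.Tendsto (fun k => v (k+1) - v k) Filter.atTop (nhds 0) := by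
    apply tendsto_of_normSq
    have h1 : Filter.Tendsto (fun k => normSq (v (k+1) - v k)) Filter.atTop (nhds 0) := by
      have := hBB0.const_mul (τ⁻¹)
      simp only [mul_zero] at this
      have heq : ∀ k, τ⁻¹ * BB k = normSq (v (k+1) - v k) := fun k =>
        inv_mul_cancel_left₀ (ne_of_gt hτ) _
      simpa [heq] using this
    simpa [sub_zero] using h1
  have he : Filter.Tendsto (fun k => w' k - w k) Filter.atTop (nhds 0) := by
    have h1 : Filter.Tendsto (fun k => w' (k+1) - w (k+1)) Filter.atTop (nhds 0) := by
      have heq : (fun k => w' (k+1) - w (k+1)) = (fun k => w (k+1) - w k) := funext hw'e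
      rw [heq]
      exact hdw
    exact (Filter.tendsto_add_atTop_iff_nat 1).1 h1
  -- boundedness of the iterates and a convergent subsequence
  obtain ⟨wh, vh, φ, hφ, hwφ, hvφ⟩ :
      ∃ (wh vh : Fin p → ℝ) (φ : ℕ → ℕ), StrictMono φ ∧
        Filter.Tendsto (fun k => w (φ k)) Filter.atTop (nhds wh) ∧
        Filter.Tendsto (fun k => v (φ k)) Filter.atTop (nhds vh) := by
    have hEk : ∀ k, (1 - ρ) * (σ * normSq (w k - ws) + τ * normSq (v k - vs)) ≤ T 0 :=
      fun k => le_trans (hTlb1 k) (hTle k)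
    set M : ℝ := max (T 0 / ((1 - ρ) * σ)) (T 0 / ((1 - ρ) * τ)) with hM
    have hnww : ∀ k, normSq (w k - ws) ≤ M := by
      intro k
      refine le_trans ?_ (le_max_left _ _)
      rw [le_div_iff₀ (by positivity)]
      have h2 : 0 ≤ (1 - ρ) * (τ * normSq (v k - vs)) :=
        mul_nonneg h1ρ.le (mul_nonneg hτ.le (normSq_nonneg' _))
      nlinarith [hEk k]
    have hnvv : ∀ k, normSq (v k - vs) ≤ M := by
      intro k
      refine le_trans ?_ (le_max_right _ _)
      rw [le_div_iff₀ (by positivity)]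
      have h2 : 0 ≤ (1 - ρ) * (σ * normSq (w k - ws)) :=
        mul_nonneg h1ρ.le (mul_nonneg hσ.le (normSq_nonneg' _))
      nlinarith [hEk k]
    set R : ℝ := Real.sqrt M with hR
    have hR0 : 0 ≤ R := Real.sqrt_nonneg _
    have hmem : ∀ k, ((w k, v k) : (Fin p → ℝ) × (Fin p → ℝ)) ∈
        Metric.closedBall ((ws, vs) : (Fin p → ℝ) × (Fin p → ℝ)) R := by
      intro k
      rw [Metric.mem_closedBall, Prod.dist_eq]
      have hwdist : dist (w k) ws ≤ R := by
        rw [dist_pi_le_iff hR0]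
        intro i
        rw [Real.dist_eq]
        have h1 : |(w k - ws) i| ≤ Real.sqrt (normSq (w k - ws)) := coord_le_sqrt_normSq _ i
        have h2 : Real.sqrt (normSq (w k - ws)) ≤ R := Real.sqrt_le_sqrt (hnww k)
        simpa [Pi.sub_apply] using h1.trans h2
      have hvdist : dist (v k) vs ≤ R := by
        rw [dist_pi_le_iff hR0]
        intro i
        rw [Real.dist_eq]
        have h1 : |(v k - vs) i| ≤ Real.sqrt (normSq (v k - vs)) := coord_le_sqrt_normSq _ i
        have h2 : Real.sqrt (normSq (v k - vs)) ≤ R := Real.sqrt_le_sqrt (hnvv k)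
        simpa [Pi.sub_apply] using h1.trans h2
      exact max_le hwdist hvdist
    obtain ⟨a, -, φ, hφ, hzφ⟩ :=
      tendsto_subseq_of_bounded (Metric.isBounded_closedBall
        (x := ((ws, vs) : (Fin p → ℝ) × (Fin p → ℝ))) (r := R)) hmem
    exact ⟨a.1, a.2, φ, hφ, (continuous_fst.tendsto a).comp hzφ,
      (continuous_snd.tendsto a).comp hzφ⟩
  -- limits of shifted subsequences
  have hdwφ : Filter.Tendsto (fun k => w (φ k + 1) - w (φ k)) Filter.atTop (nhds 0) :=
    hdw.comp hφ.tendsto_atTop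
  have hdvφ : Filter.Tendsto (fun k => v (φ k + 1) - v (φ k)) Filter.atTop (nhds 0) :=
    hdv.comp hφ.tendsto_atTop
  have heφ : Filter.Tendsto (fun k => w' (φ k) - w (φ k)) Filter.atTop (nhds 0) :=
    he.comp hφ.tendsto_atTop
  have hwφ1 : Filter.Tendsto (fun k => w (φ k + 1)) Filter.atTop (nhds wh) := by
    have := hwφ.add hdwφ
    simpa using this
  have hvφ1 : Filter.Tendsto (fun k => v (φ k + 1)) Filter.atTop (nhds vh) := by
    have := hvφ.add hdvφ
    simpa using this
  have hw'φ : Filter.Tendsto (fun k => w' (φ k)) Filter.atTop (nhds wh) := by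
    have := hwφ.add heφ
    simpa using this
  -- the limit is a saddle point : dual optimality
  have hs1h : ∀ u, dotp (b - K.mulVec wh) u - G u ≤ dotp (b - K.mulVec wh) vh - G vh := by
    intro u
    have hq : Filter.Tendsto
        (fun k => v (φ k + 1) - (v (φ k) + σ • (b - K.mulVec (w' (φ k)))))
        Filter.atTop (nhds (vh - (vh + σ • (b - K.mulVec wh)))) :=
      hvφ1.sub (hvφ.add ((tendsto_const_nhds.sub (mulVec_tendsto K hw'φ)).const_smul σ))
    have h2 : Filter.Tendsto (fun k => u - v (φ k + 1)) Filter.atTop (nhds (u - vh)) :=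
      tendsto_const_nhds.sub hvφ1
    have h3 : Filter.Tendsto
        (fun k => dotp (v (φ k + 1) - (v (φ k) + σ • (b - K.mulVec (w' (φ k)))))
          (u - v (φ k + 1)) + σ * (G u - G (v (φ k + 1))))
        Filter.atTop
        (nhds (dotp (vh - (vh + σ • (b - K.mulVec wh))) (u - vh) + σ * (G u - G vh))) :=
      (dotp_tendsto hq h2).add
        ((tendsto_const_nhds.sub (G_tendsto hG hvφ1)).const_mul σ)
    have h4 : 0 ≤ dotp (vh - (vh + σ • (b - K.mulVec wh))) (u - vh) + σ * (G u - G vh) :=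
      ge_of_tendsto h3 (Filter.Eventually.of_forall fun k => hVIv (φ k) u)
    rw [show vh - (vh + σ • (b - K.mulVec wh)) = -(σ • (b - K.mulVec wh)) from by abel,
      dotp_neg_left', dotp_smul_left'] at h4
    have h5 : dotp (b - K.mulVec wh) (u - vh) ≤ G u - G vh := by nlinarith [h4, hσ]
    rw [dotp_sub_right'] at h5
    linarith
  -- the limit is a saddle point : primal optimality
  have hFwh_le : ∀ (u : Fin p → ℝ) (cu : ℝ), F u = (cu : EReal) →
      F wh ≤ ((cu + dotp (K.mulVec vh) (wh - u) : ℝ) : EReal) := by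
    intro u cu hcu
    by_contra hlt
    push_neg at hlt
    obtain ⟨c, hc1, hc2⟩ := EReal.exists_between_coe_real hlt
    have hev1 : ∀ᶠ k in Filter.atTop, (c : EReal) < F (w (φ k + 1)) :=
      hwφ1.eventually (hFlsc wh (c : EReal) hc2)
    have hq : Filter.Tendsto
        (fun k => dotp (w (φ k + 1) - (w (φ k) + τ • K.mulVec (v (φ k + 1))))
          (u - w (φ k + 1)) + τ * cu)
        Filter.atTop
        (nhds (dotp (wh - (wh + τ • K.mulVec vh)) (u - wh) + τ * cu)) :=
      (dotp_tendsto (hwφ1.sub (hwφ.add ((mulVec_tendsto K hvφ1).const_smul τ)))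
        (tendsto_const_nhds.sub hwφ1)).add tendsto_const_nhds
    have hval : dotp (wh - (wh + τ • K.mulVec vh)) (u - wh) + τ * cu
        = τ * (cu + dotp (K.mulVec vh) (wh - u)) := by
      rw [show wh - (wh + τ • K.mulVec vh) = -(τ • K.mulVec vh) from by abel,
        dotp_neg_left', dotp_smul_left', dotp_sub_right', dotp_sub_right']
      ring
    rw [hval] at hq
    have hlim2 : τ * (cu + dotp (K.mulVec vh) (wh - u)) < τ * c :=
      mul_lt_mul_of_pos_left (EReal.coe_lt_coe_iff.1 hc1) hτ
    have hev2 := hq.eventually_lt_const hlim2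
    obtain ⟨k, hk1, hk2⟩ := (hev1.and hev2).exists
    rw [hfco (φ k)] at hk1
    have hfk : c < f (φ k) := EReal.coe_lt_coe_iff.1 hk1
    have hvi := hVIw (φ k) u cu hcu
    have hmul : τ * c < τ * f (φ k) := mul_lt_mul_of_pos_left hfk hτ
    linarith [hvi, hk2, hmul]
  have hwhne : F wh ≠ ⊤ := ne_top_of_le_ne_top (EReal.coe_ne_top _) (hFwh_le u₀ c₀ hu₀c)
  have hfh : F wh = (((F wh).toReal : ℝ) : EReal) := (EReal.coe_toReal hwhne (hFbot _)).symm
  set fh : ℝ := (F wh).toReal with hfhdef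
  have hs2h : ∀ ww (cw : ℝ), F ww = (cw : EReal) →
      dotp (b - K.mulVec wh) vh + fh ≤ dotp (b - K.mulVec ww) vh + cw := by
    intro ww cw hcw
    have h := hFwh_le ww cw hcw
    rw [hfh] at h
    have hreal : fh ≤ cw + dotp (K.mulVec vh) (wh - ww) := EReal.coe_le_coe_iff.1 h
    rw [dotp_sub_right', hKsym vh wh, hKsym vh ww] at hreal
    rw [dotp_sub_left', dotp_sub_left']
    linarith
  have hsadh : IsSaddle X y F G wh vh := saddle_of_real wh vh fh hfh hs1h hs2h
  -- Phase 2 : Fejér-type convergence to (wh, vh)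
  have key2 := key wh vh fh hfh hs1h hs2h
  set T2 : ℕ → ℝ := fun k => σ * normSq (w k - wh) + τ * normSq (v k - vh)
    + 2 * τ * σ * dotp (K.mulVec (w' k - w k)) (vh - v k)
    + ρ * (σ * normSq (w' k - w k)) with hT2
  have hT2mono : ∀ k, T2 (k+1) ≤ T2 k := by
    intro k
    have h1 : T2 (k+1) + (1 - ρ) * (AA k + BB k) ≤ T2 k := key2 k
    have h2 : 0 ≤ (1 - ρ) * (AA k + BB k) := mul_nonneg h1ρ.le (hABnn k)
    linarith
  have hT2lb : ∀ k, (1 - ρ) * (σ * normSq (w k - wh) + τ * normSq (v k - vh)) ≤ T2 k :=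
    fun k => Tlb wh vh k
  have hT2nn : ∀ k, 0 ≤ T2 k := by
    intro k
    refine le_trans ?_ (hT2lb k)
    exact mul_nonneg h1ρ.le (add_nonneg (mul_nonneg hσ.le (normSq_nonneg' _))
      (mul_nonneg hτ.le (normSq_nonneg' _)))
  have hT2φ : Filter.Tendsto (fun k => T2 (φ k)) Filter.atTop (nhds 0) := by
    have h1 : Filter.Tendsto (fun k => σ * normSq (w (φ k) - wh)) Filter.atTop (nhds 0) := by
      have := (normSq_tendsto hwφ).const_mul σ
      simpa using this
    have h2 : Filter.Tendsto (fun k => τ * normSq (v (φ k) - vh)) Filter.atTop (nhds 0) := by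
      have := (normSq_tendsto hvφ).const_mul τ
      simpa using this
    have h3 : Filter.Tendsto
        (fun k => 2 * τ * σ * dotp (K.mulVec (w' (φ k) - w (φ k))) (vh - v (φ k)))
        Filter.atTop (nhds 0) := by
      have hd : Filter.Tendsto
          (fun k => dotp (K.mulVec (w' (φ k) - w (φ k))) (vh - v (φ k)))
          Filter.atTop (nhds (dotp (K.mulVec (0 : Fin p → ℝ)) (vh - vh))) := by
        have hm : Filter.Tendsto (fun k => K.mulVec (w' (φ k) - w (φ k)))
            Filter.atTop (nhds (K.mulVec (0 : Fin p → ℝ))) := mulVec_tendsto K heφ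
        exact dotp_tendsto hm (tendsto_const_nhds.sub hvφ)
      have hval : dotp (K.mulVec (0 : Fin p → ℝ)) (vh - vh) = 0 := by
        rw [Matrix.mulVec_zero, dotp_zero_left']
      rw [hval] at hd
      have := hd.const_mul (2 * τ * σ)
      simpa using this
    have h4 : Filter.Tendsto (fun k => ρ * (σ * normSq (w' (φ k) - w (φ k))))
        Filter.atTop (nhds 0) := by
      have h0 : Filter.Tendsto (fun k => normSq (w' (φ k) - w (φ k))) Filter.atTop (nhds 0) := by
        have := normSq_tendsto (a := (0 : Fin p → ℝ)) heφ
        simpa [sub_zero] using this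
      have := (h0.const_mul σ).const_mul ρ
      simpa [mul_assoc] using this
    have h5 := ((h1.add h2).add h3).add h4
    simpa using h5
  have hT2zero : Filter.Tendsto T2 Filter.atTop (nhds 0) :=
    antitone_tendsto_zero T2 hT2mono hT2nn φ hφ hT2φ
  have hE20 : Filter.Tendsto
      (fun k => (1 - ρ) * (σ * normSq (w k - wh) + τ * normSq (v k - vh)))
      Filter.atTop (nhds 0) := by
    refine squeeze_zero (fun k => ?_) (fun k => le_trans (hT2lb k) ?_) hT2zero
    · exact mul_nonneg h1ρ.le (add_nonneg (mul_nonneg hσ.le (normSq_nonneg' _))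
        (mul_nonneg hτ.le (normSq_nonneg' _)))
    · exact le_of_eq rfl
  have hE2 : Filter.Tendsto (fun k => σ * normSq (w k - wh) + τ * normSq (v k - vh))
      Filter.atTop (nhds 0) := by
    have := hE20.const_mul ((1 - ρ)⁻¹)
    simp only [mul_zero] at this
    have heq : ∀ k, (1 - ρ)⁻¹ * ((1 - ρ) * (σ * normSq (w k - wh) + τ * normSq (v k - vh)))
        = σ * normSq (w k - wh) + τ * normSq (v k - vh) := fun k =>
      inv_mul_cancel_left₀ (ne_of_gt h1ρ) _
    simpa [heq] using this
  have hwlim : Filter.Tendsto w Filter.atTop (nhds wh) := by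
    apply tendsto_of_normSq
    have h1 : Filter.Tendsto (fun k => σ * normSq (w k - wh)) Filter.atTop (nhds 0) := by
      refine squeeze_zero (fun k => mul_nonneg hσ.le (normSq_nonneg' _)) (fun k => ?_) hE2
      have := mul_nonneg hτ.le (normSq_nonneg' (v k - vh))
      linarith
    have := h1.const_mul (σ⁻¹)
    simp only [mul_zero] at this
    have heq : ∀ k, σ⁻¹ * (σ * normSq (w k - wh)) = normSq (w k - wh) := fun k =>
      inv_mul_cancel_left₀ (ne_of_gt hσ) _
    simpa [heq] using this
  have hvlim : Filter.Tendsto v Filter.atTop (nhds vh) := by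
    apply tendsto_of_normSq
    have h1 : Filter.Tendsto (fun k => τ * normSq (v k - vh)) Filter.atTop (nhds 0) := by
      refine squeeze_zero (fun k => mul_nonneg hτ.le (normSq_nonneg' _)) (fun k => ?_) hE2
      have := mul_nonneg hσ.le (normSq_nonneg' (w k - wh))
      linarith
    have := h1.const_mul (τ⁻¹)
    simp only [mul_zero] at this
    have heq : ∀ k, τ⁻¹ * (τ * normSq (v k - vh)) = normSq (v k - vh) := fun k =>
      inv_mul_cancel_left₀ (ne_of_gt hτ) _
    simpa [heq] using this
  exact ⟨wh, vh, hsadh, hwlim, hvlim⟩
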